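/- For every integer d ≥ 3, the derived subgroup Γ_d' of the Fabrykowski–Gupta group is the normal closure of the commutator [a,r] = r^{−a} r in Γ_d; it is contained in the first level stabilizer Stab_{Γ_d}(1), has index d in Stab_{Γ_d}(1), and Stab_{Γ_d}(1) is the internal semidirect product Γ_d' ⋊ ⟨r⟩. -/

import Mathlib

namespace FG

variable (d : ℕ) [NeZero d]

/-- The rooted-tree automorphism `a` of the `d`-regular rooted tree (vertex set: the free
monoid `{0,…,d-1}^*`), acting by `(x w)^a = ((x+1) mod d) w`. -/
def aFun : List (Fin d) → List (Fin d)
  | [] => []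
  | x :: w => (x + 1) :: w

def aInv : List (Fin d) → List (Fin d)
  | [] => []
  | x :: w => (x - 1) :: w

lemma aInv_aFun : ∀ w, aInv d (aFun d w) = w := by
  intro w; cases w <;> simp [aFun, aInv]

lemma aFun_aInv : ∀ w, aFun d (aInv d w) = w := by
  intro w; cases w <;> simp [aFun, aInv]

def aPerm : Equiv.Perm (List (Fin d)) :=
  ⟨aFun d, aInv d, aInv_aFun d, aFun_aInv d⟩

/-- The rooted-tree automorphism `r`:
`(0 w)^r = 0 w^a`, `(x w)^r = x w` for `1 ≤ x ≤ d-2`, `((d-1) w)^r = (d-1) w^r`. -/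
def rFun : List (Fin d) → List (Fin d)
  | [] => []
  | x :: w => if x = 0 then x :: aFun d w else if x = -1 then x :: rFun w else x :: w

def rInv : List (Fin d) → List (Fin d)
  | [] => []
  | x :: w => if x = 0 then x :: aInv d w else if x = -1 then x :: rInv w else x :: w

lemma rInv_rFun : ∀ w, rInv d (rFun d w) = w := by
  intro w
  induction w with
  | nil => simp [rFun, rInv]
  | cons x w ih =>
    by_cases h0 : x = 0
    · simp [rFun, rInv, h0, aInv_aFun]
    · by_cases h1 : x = -1
      · subst h1
        have hd : ¬ d = 1 := by simpa using h0
        simp [rFun, rInv, hd, ih]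
      · simp [rFun, rInv, h0, h1]

lemma rFun_rInv : ∀ w, rFun d (rInv d w) = w := by
  intro w
  induction w with
  | nil => simp [rFun, rInv]
  | cons x w ih =>
    by_cases h0 : x = 0
    · simp [rFun, rInv, h0, aFun_aInv]
    · by_cases h1 : x = -1
      · subst h1
        have hd : ¬ d = 1 := by simpa using h0
        simp [rFun, rInv, hd, ih]
      · simp [rFun, rInv, h0, h1]

def rPerm : Equiv.Perm (List (Fin d)) :=
  ⟨rFun d, rInv d, rInv_rFun d, rFun_rInv d⟩

/-- The Fabrykowski–Gupta group `Γ_d`, as the subgroup of the permutation group of the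
free monoid `{0,…,d-1}^*` generated by the tree automorphisms `a` and `r`. -/
def Gamma : Subgroup (Equiv.Perm (List (Fin d))) :=
  Subgroup.closure {aPerm d, rPerm d}

/-- The generator `a` as an element of `Γ_d`. -/
def aG : ↥(Gamma d) :=
  ⟨aPerm d, Subgroup.subset_closure (Set.mem_insert _ _)⟩

/-- The generator `r` as an element of `Γ_d`. -/
def rG : ↥(Gamma d) :=
  ⟨rPerm d, Subgroup.subset_closure (Set.mem_insert_iff.mpr (Or.inr rfl))⟩

/-- The `n`-th level stabilizer `Stab_{Γ_d}(n)`: all elements of `Γ_d` fixing every word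
of length `n`. -/
def Stab (n : ℕ) : Subgroup ↥(Gamma d) where
  carrier := { g | ∀ w : List (Fin d), w.length = n → (g : Equiv.Perm (List (Fin d))) w = w }
  one_mem' := by intro w _; rfl
  mul_mem' := by
    intro g h hg hh w hw
    have : ((g * h : ↥(Gamma d)) : Equiv.Perm (List (Fin d))) w
        = (g : Equiv.Perm (List (Fin d))) ((h : Equiv.Perm (List (Fin d))) w) := rfl
    rw [this, hh w hw, hg w hw]
  inv_mem' := by
    intro g hg w hw
    have h1 := hg w hw
    calc ((g⁻¹ : ↥(Gamma d)) : Equiv.Perm (List (Fin d))) w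
        = (g : Equiv.Perm (List (Fin d)))⁻¹ ((g : Equiv.Perm (List (Fin d))) w) := by
          rw [h1]; rfl
      _ = w := Equiv.symm_apply_apply _ _

/-- The conjugate `g_i = r^{a^i} = a^{-i} r a^i` in `Γ_d`. -/
def gG (i : ℕ) : ↥(Gamma d) := (aG d ^ i)⁻¹ * rG d * aG d ^ i


/-! ### Auxiliary development -/

section Aux

open Subgroup

open scoped commutatorElement

lemma aPerm_apply (w : List (Fin d)) : aPerm d w = aFun d w := rfl

lemma rPerm_apply (w : List (Fin d)) : rPerm d w = rFun d w := rfl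

lemma rFun_singleton (x : Fin d) : rFun d [x] = [x] := by
  by_cases h0 : x = 0
  · simp [rFun, h0, aFun]
  · by_cases h1 : x = -1
    · subst h1
      have hd : ¬ d = 1 := by simpa using h0
      simp [rFun, hd]
    · simp [rFun, h0, h1]

lemma rPerm_pair (x y : Fin d) :
    rPerm d [x, y] = [x, y + if x = 0 then 1 else 0] := by
  rw [rPerm_apply]
  by_cases h0 : x = 0
  · simp [rFun, h0, aFun]
  · by_cases h1 : x = -1
    · subst h1
      have hd : ¬ d = 1 := by simpa using h0
      simp [rFun, aFun, hd, rFun_singleton]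
    · simp [rFun, h0, h1]

/-- The level-≤2 "portrait" structure shared by all elements of `Γ_d`. -/
def Struct (g : Equiv.Perm (List (Fin d))) : Prop :=
  ∃ s : Fin d, ∃ t : Fin d → Fin d,
    (∀ x : Fin d, g [x] = [x + s]) ∧ ∀ x y : Fin d, g [x, y] = [x + s, y + t x]

lemma struct_aPerm : Struct d (aPerm d) :=
  ⟨1, fun _ => 0, fun _ => rfl, fun x y => by
    rw [aPerm_apply]; simp [aFun]⟩

lemma struct_rPerm : Struct d (rPerm d) := by
  refine ⟨0, fun x => if x = 0 then 1 else 0, fun x => ?_, fun x y => ?_⟩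
  · rw [add_zero, rPerm_apply, rFun_singleton]
  · rw [add_zero, rPerm_pair]

lemma Struct.mul {f g : Equiv.Perm (List (Fin d))} (hf : Struct d f) (hg : Struct d g) :
    Struct d (f * g) := by
  obtain ⟨s, t, h1, h2⟩ := hf
  obtain ⟨s', t', h1', h2'⟩ := hg
  refine ⟨s' + s, fun x => t' x + t (x + s'), fun x => ?_, fun x y => ?_⟩
  · rw [Equiv.Perm.mul_apply, h1' x, h1 (x + s'), add_assoc]
  · rw [Equiv.Perm.mul_apply, h2' x y, h2 (x + s') (y + t' x), add_assoc, add_assoc]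

lemma Struct.inv {f : Equiv.Perm (List (Fin d))} (hf : Struct d f) : Struct d f⁻¹ := by
  obtain ⟨s, t, h1, h2⟩ := hf
  refine ⟨-s, fun x => -(t (x + -s)), fun x => ?_, fun x y => ?_⟩
  · have h := h1 (x + -s)
    rw [neg_add_cancel_right] at h
    rw [← h, ← Equiv.Perm.mul_apply, inv_mul_cancel, Equiv.Perm.one_apply]
  · have h := h2 (x + -s) (y + -(t (x + -s)))
    rw [neg_add_cancel_right, neg_add_cancel_right] at h
    rw [← h, ← Equiv.Perm.mul_apply, inv_mul_cancel, Equiv.Perm.one_apply]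

lemma struct_one : Struct d (1 : Equiv.Perm (List (Fin d))) :=
  ⟨0, fun _ => 0, fun x => by simp, fun x y => by simp⟩

lemma struct_of_mem {g : Equiv.Perm (List (Fin d))} (hg : g ∈ Gamma d) : Struct d g := by
  induction hg using Subgroup.closure_induction with
  | mem x hx =>
    rcases hx with rfl | rfl
    · exact struct_aPerm d
    · exact struct_rPerm d
  | one => exact struct_one d
  | mul x y hx hy ihx ihy => exact Struct.mul d ihx ihy
  | inv x hx ihx => exact Struct.inv d ihx

/-- The root shift of `g ∈ Γ_d`. -/
def sOf (g : ↥(Gamma d)) : Fin d := ((g : Equiv.Perm (List (Fin d))) [0]).headI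

/-- The level-one shifts of `g ∈ Γ_d`. -/
def tOf (g : ↥(Gamma d)) (x : Fin d) : Fin d :=
  (((g : Equiv.Perm (List (Fin d))) [x, 0]).tail).headI

lemma apply_single (g : ↥(Gamma d)) (x : Fin d) :
    (g : Equiv.Perm (List (Fin d))) [x] = [x + sOf d g] := by
  obtain ⟨s, t, h1, h2⟩ := struct_of_mem d g.2
  have hs : sOf d g = s := by
    show ((g : Equiv.Perm (List (Fin d))) [0]).headI = s
    rw [h1 0]; exact zero_add s
  rw [hs, h1]

lemma apply_pair (g : ↥(Gamma d)) (x y : Fin d) :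
    (g : Equiv.Perm (List (Fin d))) [x, y] = [x + sOf d g, y + tOf d g x] := by
  obtain ⟨s, t, h1, h2⟩ := struct_of_mem d g.2
  have hs : sOf d g = s := by
    show ((g : Equiv.Perm (List (Fin d))) [0]).headI = s
    rw [h1 0]; exact zero_add s
  have ht : tOf d g x = t x := by
    show ((((g : Equiv.Perm (List (Fin d)))) [x, 0]).tail).headI = t x
    rw [h2 x 0]; exact zero_add (t x)
  rw [hs, ht, h2]

lemma sOf_eq {g : ↥(Gamma d)} {x s : Fin d}
    (h : (g : Equiv.Perm (List (Fin d))) [x] = [x + s]) : sOf d g = s := by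
  rw [apply_single] at h
  simp only [List.cons.injEq, and_true] at h
  exact add_left_cancel h

lemma tOf_eq {g : ↥(Gamma d)} {x y u v : Fin d}
    (h : (g : Equiv.Perm (List (Fin d))) [x, y] = [u, y + v]) : tOf d g x = v := by
  rw [apply_pair] at h
  simp only [List.cons.injEq, and_true] at h
  exact add_left_cancel h.2

lemma coe_mul_apply (g h : ↥(Gamma d)) (w : List (Fin d)) :
    ((g * h : ↥(Gamma d)) : Equiv.Perm (List (Fin d))) w
      = (g : Equiv.Perm (List (Fin d))) ((h : Equiv.Perm (List (Fin d))) w) := rfl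

lemma sOf_mul (g h : ↥(Gamma d)) : sOf d (g * h) = sOf d h + sOf d g :=
  sOf_eq d (x := 0) (by rw [coe_mul_apply, apply_single, apply_single, add_assoc])

lemma tOf_mul (g h : ↥(Gamma d)) (x : Fin d) :
    tOf d (g * h) x = tOf d h x + tOf d g (x + sOf d h) :=
  tOf_eq d (u := x + sOf d h + sOf d g) (y := 0)
    (by rw [coe_mul_apply, apply_pair, apply_pair, add_assoc (0 : Fin d)])

lemma sOf_one : sOf d 1 = 0 := sOf_eq d (x := 0) (by simp)

lemma tOf_one (x : Fin d) : tOf d 1 x = 0 := tOf_eq d (u := x) (y := 0) (by simp)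

lemma sOf_aG : sOf d (aG d) = 1 := sOf_eq d (x := 0) rfl

lemma tOf_aG (x : Fin d) : tOf d (aG d) x = 0 :=
  tOf_eq d (u := x + 1) (y := 0) (by rw [add_zero (0 : Fin d)]; rfl)

lemma sOf_rG : sOf d (rG d) = 0 :=
  sOf_eq d (x := 0) (by rw [add_zero]; exact rFun_singleton d 0)

lemma tOf_rG (x : Fin d) : tOf d (rG d) x = if x = 0 then 1 else 0 :=
  tOf_eq d (u := x) (y := 0) (rPerm_pair d x 0)

/-- The canonical additive map `Fin d → ZMod d`. -/
def cZ (x : Fin d) : ZMod d := (x.val : ZMod d)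

lemma cZ_add (x y : Fin d) : cZ d (x + y) = cZ d x + cZ d y := by
  simp only [cZ, Fin.val_add, ZMod.natCast_mod, Nat.cast_add]

lemma cZ_zero : cZ d 0 = 0 := by simp [cZ]

lemma cZ_one : cZ d 1 = 1 := by
  simp only [cZ, Fin.val_one', ZMod.natCast_mod, Nat.cast_one]

lemma cZ_eq_zero {x : Fin d} (h : cZ d x = 0) : x = 0 := by
  have hd : d ∣ x.val := (ZMod.natCast_eq_zero_iff _ _).mp h
  have hv : x.val = 0 := Nat.eq_zero_of_dvd_of_lt hd x.isLt
  exact Fin.ext (by simp [hv])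

/-- First abelianized coordinate. -/
def phi1 (g : ↥(Gamma d)) : ZMod d := cZ d (sOf d g)

/-- Second abelianized coordinate. -/
def phi2 (g : ↥(Gamma d)) : ZMod d := ∑ x : Fin d, cZ d (tOf d g x)

lemma phi1_mul (g h : ↥(Gamma d)) : phi1 d (g * h) = phi1 d g + phi1 d h := by
  rw [phi1, sOf_mul, cZ_add, add_comm]; rfl

lemma phi2_mul (g h : ↥(Gamma d)) : phi2 d (g * h) = phi2 d g + phi2 d h := by
  have reind : (∑ x : Fin d, cZ d (tOf d g (x + sOf d h))) = ∑ x : Fin d, cZ d (tOf d g x) :=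
    Fintype.sum_equiv (Equiv.addRight (sOf d h)) _ _ (fun x => rfl)
  calc phi2 d (g * h) = ∑ x : Fin d, (cZ d (tOf d h x) + cZ d (tOf d g (x + sOf d h))) := by
        refine Finset.sum_congr rfl fun x _ => ?_
        rw [tOf_mul, cZ_add]
      _ = phi2 d g + phi2 d h := by
        rw [Finset.sum_add_distrib, reind, add_comm]; rfl

lemma phi1_one : phi1 d 1 = 0 := by rw [phi1, sOf_one, cZ_zero]

lemma phi2_one : phi2 d 1 = 0 := by
  simp [phi2, tOf_one, cZ_zero]

lemma phi1_aG : phi1 d (aG d) = 1 := by rw [phi1, sOf_aG, cZ_one]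

lemma phi2_aG : phi2 d (aG d) = 0 := by simp [phi2, tOf_aG, cZ_zero]

lemma phi1_rG : phi1 d (rG d) = 0 := by rw [phi1, sOf_rG, cZ_zero]

lemma phi2_rG : phi2 d (rG d) = 1 := by
  have : ∀ x : Fin d, cZ d (tOf d (rG d) x) = if x = 0 then 1 else 0 := by
    intro x
    rw [tOf_rG, apply_ite (cZ d), cZ_one, cZ_zero]
  rw [phi2]
  simp only [this]
  rw [Finset.sum_ite_eq' Finset.univ (0 : Fin d) (fun _ => (1 : ZMod d))]
  simp

/-- The abelianization homomorphism `Γ_d → ZMod d × ZMod d`. -/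
def psiG : ↥(Gamma d) →* Multiplicative (ZMod d × ZMod d) where
  toFun g := Multiplicative.ofAdd (phi1 d g, phi2 d g)
  map_one' := by
    show Multiplicative.ofAdd (phi1 d 1, phi2 d 1) = 1
    rw [phi1_one, phi2_one]; rfl
  map_mul' g h := by
    show Multiplicative.ofAdd (phi1 d (g * h), phi2 d (g * h))
      = Multiplicative.ofAdd (phi1 d g, phi2 d g) * Multiplicative.ofAdd (phi1 d h, phi2 d h)
    rw [phi1_mul, phi2_mul, ← ofAdd_add]
    rfl

lemma psiG_apply (g : ↥(Gamma d)) :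
    psiG d g = Multiplicative.ofAdd (phi1 d g, phi2 d g) := rfl

lemma psiG_eq_one {g : ↥(Gamma d)} (h : psiG d g = 1) : phi1 d g = 0 ∧ phi2 d g = 0 := by
  have h' : (phi1 d g, phi2 d g) = ((0 : ZMod d), (0 : ZMod d)) := by
    have := congrArg Multiplicative.toAdd h
    simpa [psiG_apply] using this
  exact ⟨congrArg Prod.fst h', congrArg Prod.snd h'⟩

lemma commutator_le_ker : commutator ↥(Gamma d) ≤ (psiG d).ker :=
  Abelianization.commutator_subset_ker (psiG d)

lemma mem_stab_one_iff (g : ↥(Gamma d)) : g ∈ Stab d 1 ↔ sOf d g = 0 := by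
  constructor
  · intro hg
    have h1 : (g : Equiv.Perm (List (Fin d))) [0] = [0] := hg [0] rfl
    have h2 := apply_single d g 0
    rw [h1] at h2
    simp only [List.cons.injEq, and_true] at h2
    rw [← zero_add (sOf d g), ← h2]
  · intro hs w hw
    obtain ⟨x, rfl⟩ := List.length_eq_one_iff.mp hw
    rw [apply_single, hs, add_zero]

lemma rG_mem_stab : rG d ∈ Stab d 1 := (mem_stab_one_iff d _).mpr (sOf_rG d)

lemma aPerm_pow_nil (n : ℕ) : ((aPerm d) ^ n) [] = [] := by
  induction n with
  | zero => rfl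
  | succ n ih => rw [pow_succ, Equiv.Perm.mul_apply]; rw [show aPerm d [] = [] from rfl, ih]

open Fin.NatCast in
lemma aPerm_pow_cons (n : ℕ) (x : Fin d) (w : List (Fin d)) :
    ((aPerm d) ^ n) (x :: w) = (x + (n : Fin d)) :: w := by
  induction n with
  | zero => simp
  | succ n ih =>
    rw [pow_succ', Equiv.Perm.mul_apply, ih]
    rw [show aPerm d ((x + (n : Fin d)) :: w) = (x + (n : Fin d) + 1) :: w from rfl]
    congr 1
    push_cast
    abel

open Fin.NatCast in
lemma aPerm_pow_card : (aPerm d) ^ d = 1 := by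
  apply Equiv.ext
  intro w
  cases w with
  | nil => exact aPerm_pow_nil d d
  | cons x w => rw [aPerm_pow_cons]; simp

lemma rPerm_pow_nil (n : ℕ) : ((rPerm d) ^ n) [] = [] := by
  induction n with
  | zero => rfl
  | succ n ih => rw [pow_succ, Equiv.Perm.mul_apply]; rw [show rPerm d [] = [] from rfl, ih]

lemma rPerm_pow_cons (n : ℕ) : ∀ (x : Fin d) (w : List (Fin d)),
    ((rPerm d) ^ n) (x :: w) = if x = 0 then x :: ((aPerm d) ^ n) w
      else if x = -1 then x :: ((rPerm d) ^ n) w else x :: w := by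
  induction n with
  | zero => intro x w; split_ifs <;> simp
  | succ n ih =>
    intro x w
    rw [pow_succ', Equiv.Perm.mul_apply, ih x w]
    by_cases h0 : x = 0
    · rw [if_pos h0, if_pos h0, pow_succ' (aPerm d), Equiv.Perm.mul_apply, rPerm_apply]
      simp only [rFun]
      rw [if_pos h0]
      rfl
    · by_cases h1 : x = -1
      · rw [if_neg h0, if_pos h1, if_neg h0, if_pos h1,
          Equiv.Perm.mul_apply, rPerm_apply]
        simp only [rFun]
        rw [if_neg h0, if_pos h1]
        rfl
      · rw [if_neg h0, if_neg h1, if_neg h0, if_neg h1, rPerm_apply]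
        simp only [rFun]
        rw [if_neg h0, if_neg h1]

lemma rPerm_pow_card_apply : ∀ w, ((rPerm d) ^ d) w = w := by
  intro w
  induction w with
  | nil => exact rPerm_pow_nil d d
  | cons x w ih =>
    rw [rPerm_pow_cons]
    by_cases h0 : x = 0
    · rw [if_pos h0, aPerm_pow_card]; rfl
    · by_cases h1 : x = -1
      · rw [if_neg h0, if_pos h1, ih]
      · rw [if_neg h0, if_neg h1]

lemma rPerm_pow_card : (rPerm d) ^ d = 1 :=
  Equiv.ext (fun w => rPerm_pow_card_apply d w)

lemma aG_pow_card : aG d ^ d = 1 := by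
  apply Subtype.ext
  rw [SubmonoidClass.coe_pow]
  exact aPerm_pow_card d

lemma rG_pow_card : rG d ^ d = 1 := by
  apply Subtype.ext
  rw [SubmonoidClass.coe_pow]
  exact rPerm_pow_card d

lemma zpow_eq_one_of_dvd {g : ↥(Gamma d)} (hg : g ^ d = 1) {k : ℤ} (hk : (d : ℤ) ∣ k) :
    g ^ k = 1 := by
  obtain ⟨m, rfl⟩ := hk
  rw [zpow_mul, zpow_natCast, hg, one_zpow]

lemma closure_pair_eq_top : Subgroup.closure {aG d, rG d} = (⊤ : Subgroup ↥(Gamma d)) := by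
  have h : Subgroup.closure
      ((Subtype.val) ⁻¹' ({aPerm d, rPerm d} : Set (Equiv.Perm (List (Fin d)))))
        = (⊤ : Subgroup ↥(Gamma d)) :=
    Subgroup.closure_closure_coe_preimage
  rw [← h]
  congr 1
  ext u
  simp only [Set.mem_preimage, Set.mem_insert_iff, Set.mem_singleton_iff]
  constructor
  · rintro (rfl | rfl)
    · exact Or.inl rfl
    · exact Or.inr rfl
  · rintro (h | h)
    · exact Or.inl (Subtype.ext h)
    · exact Or.inr (Subtype.ext h)

lemma rep_mod (N : Subgroup ↥(Gamma d)) [N.Normal]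
    (hcomm : Commute ((QuotientGroup.mk' N) (aG d)) ((QuotientGroup.mk' N) (rG d)))
    (g : ↥(Gamma d)) :
    ∃ m n : ℤ, (QuotientGroup.mk' N) g
      = (QuotientGroup.mk' N) (aG d) ^ m * (QuotientGroup.mk' N) (rG d) ^ n := by
  have hg : g ∈ Subgroup.closure {aG d, rG d} := by
    rw [closure_pair_eq_top]; exact Subgroup.mem_top g
  induction hg using Subgroup.closure_induction with
  | mem x hx =>
    rcases hx with rfl | rfl
    · exact ⟨1, 0, by simp⟩
    · exact ⟨0, 1, by simp⟩
  | one => exact ⟨0, 0, by simp⟩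
  | mul x y hx hy ihx ihy =>
    obtain ⟨m, n, hmn⟩ := ihx
    obtain ⟨m', n', hmn'⟩ := ihy
    refine ⟨m + m', n + n', ?_⟩
    rw [map_mul, hmn, hmn', (hcomm.symm.zpow_zpow n m').mul_mul_mul_comm, ← zpow_add, ← zpow_add]
  | inv x hx ihx =>
    obtain ⟨m, n, hmn⟩ := ihx
    refine ⟨-m, -n, ?_⟩
    rw [map_inv, hmn, mul_inv_rev, ← zpow_neg, ← zpow_neg,
      (hcomm.symm.zpow_zpow (-n) (-m)).eq]

lemma commute_in_commutator_quotient :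
    Commute ((QuotientGroup.mk' (commutator ↥(Gamma d))) (aG d))
      ((QuotientGroup.mk' (commutator ↥(Gamma d))) (rG d)) := by
  rw [← commutatorElement_eq_one_iff_commute, ← map_commutatorElement,
    ← MonoidHom.mem_ker, QuotientGroup.ker_mk']
  exact commutator_mem_commutator (Subgroup.mem_top _) (Subgroup.mem_top _)

lemma rep (g : ↥(Gamma d)) :
    ∃ m n : ℤ, g * (aG d ^ m * rG d ^ n)⁻¹ ∈ commutator ↥(Gamma d) := by
  obtain ⟨m, n, h⟩ := rep_mod d (commutator ↥(Gamma d)) (commute_in_commutator_quotient d) g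
  refine ⟨m, n, ?_⟩
  rw [← QuotientGroup.ker_mk' (commutator ↥(Gamma d)), MonoidHom.mem_ker,
    map_mul, map_inv, map_mul, map_zpow, map_zpow, h, mul_inv_eq_one]

lemma key_decomp {g : ↥(Gamma d)} {m n : ℤ}
    (hγ : g * (aG d ^ m * rG d ^ n)⁻¹ ∈ commutator ↥(Gamma d)) :
    phi1 d g = (m : ZMod d) ∧ phi2 d g = (n : ZMod d) := by
  have h1 : psiG d (g * (aG d ^ m * rG d ^ n)⁻¹) = 1 := commutator_le_ker d hγ
  rw [map_mul, map_inv, mul_inv_eq_one] at h1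
  have h2 : psiG d (aG d ^ m * rG d ^ n)
      = Multiplicative.ofAdd (((m : ZMod d), (0 : ZMod d)) + ((0 : ZMod d), (n : ZMod d))) := by
    have ea : psiG d (aG d) = Multiplicative.ofAdd ((1 : ZMod d), (0 : ZMod d)) := by
      rw [psiG_apply, phi1_aG, phi2_aG]
    have er : psiG d (rG d) = Multiplicative.ofAdd ((0 : ZMod d), (1 : ZMod d)) := by
      rw [psiG_apply, phi1_rG, phi2_rG]
    have pa : (Multiplicative.ofAdd ((1 : ZMod d), (0 : ZMod d))) ^ m
        = Multiplicative.ofAdd (((m : ZMod d), (0 : ZMod d))) := by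
      apply Multiplicative.toAdd.injective
      rw [toAdd_zpow]
      simp [Prod.smul_mk, zsmul_eq_mul]
    have pr : (Multiplicative.ofAdd ((0 : ZMod d), (1 : ZMod d))) ^ n
        = Multiplicative.ofAdd (((0 : ZMod d), (n : ZMod d))) := by
      apply Multiplicative.toAdd.injective
      rw [toAdd_zpow]
      simp [Prod.smul_mk, zsmul_eq_mul]
    rw [map_mul, map_zpow, map_zpow, ea, er, pa, pr, ← ofAdd_add]
  have h3 : (phi1 d g, phi2 d g) = (((m : ZMod d) + 0, 0 + (n : ZMod d)) : ZMod d × ZMod d) := by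
    have := h1.trans h2
    rw [psiG_apply] at this
    have h4 := congrArg Multiplicative.toAdd this
    simpa [Prod.mk_add_mk] using h4
  refine ⟨?_, ?_⟩
  · have := congrArg Prod.fst h3; simpa using this
  · have := congrArg Prod.snd h3; simpa using this

lemma commutator_eq_nc :
    commutator ↥(Gamma d) = Subgroup.normalClosure {⁅aG d, rG d⁆} := by
  apply le_antisymm
  · set N := Subgroup.normalClosure ({⁅aG d, rG d⁆} : Set ↥(Gamma d)) with hN
    have : N.Normal := Subgroup.normalClosure_normal
    have hcomm : Commute ((QuotientGroup.mk' N) (aG d)) ((QuotientGroup.mk' N) (rG d)) := by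
      rw [← commutatorElement_eq_one_iff_commute, ← map_commutatorElement,
        ← MonoidHom.mem_ker, QuotientGroup.ker_mk']
      exact Subgroup.subset_normalClosure rfl
    rw [_root_.commutator_def, Subgroup.commutator_le]
    intro g₁ _ g₂ _
    rw [← QuotientGroup.ker_mk' N, MonoidHom.mem_ker, map_commutatorElement,
      commutatorElement_eq_one_iff_commute]
    obtain ⟨m, n, hm⟩ := rep_mod d N hcomm g₁
    obtain ⟨m', n', hm'⟩ := rep_mod d N hcomm g₂
    rw [hm, hm']
    set A := (QuotientGroup.mk' N) (aG d)
    set R := (QuotientGroup.mk' N) (rG d)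
    have c1 : Commute (A ^ m) (A ^ m' * R ^ n') :=
      ((Commute.refl A).zpow_zpow m m').mul_right (hcomm.zpow_zpow m n')
    have c2 : Commute (R ^ n) (A ^ m' * R ^ n') :=
      ((hcomm.symm.zpow_zpow n m')).mul_right ((Commute.refl R).zpow_zpow n n')
    exact c1.mul_left c2
  · apply Subgroup.normalClosure_le_normal
    intro x hx
    rw [Set.mem_singleton_iff] at hx
    subst hx
    exact commutator_mem_commutator (Subgroup.mem_top _) (Subgroup.mem_top _)

lemma commutator_le_stab : commutator ↥(Gamma d) ≤ Stab d 1 := by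
  intro g hg
  have h1 := (psiG_eq_one d ((commutator_le_ker d) hg)).1
  rw [phi1] at h1
  exact (mem_stab_one_iff d g).mpr (cZ_eq_zero d h1)

/-- The residue homomorphism `Stab(1) → ZMod d` whose kernel is `Γ_d'`. -/
def chi : ↥(Stab d 1) →* Multiplicative (ZMod d) where
  toFun g := Multiplicative.ofAdd (phi2 d (g : ↥(Gamma d)))
  map_one' := by
    show Multiplicative.ofAdd (phi2 d ((1 : ↥(Stab d 1)) : ↥(Gamma d))) = 1
    rw [show ((1 : ↥(Stab d 1)) : ↥(Gamma d)) = 1 from rfl, phi2_one]; rfl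
  map_mul' g h := by
    show Multiplicative.ofAdd (phi2 d ((g * h : ↥(Stab d 1)) : ↥(Gamma d)))
      = Multiplicative.ofAdd (phi2 d (g : ↥(Gamma d)))
        * Multiplicative.ofAdd (phi2 d (h : ↥(Gamma d)))
    rw [show ((g * h : ↥(Stab d 1)) : ↥(Gamma d)) = (g : ↥(Gamma d)) * h from rfl,
      phi2_mul, ofAdd_add]

lemma phi2_rG_pow (k : ℕ) : phi2 d (rG d ^ k) = (k : ZMod d) := by
  induction k with
  | zero => rw [pow_zero, phi2_one]; simp
  | succ k ih => rw [pow_succ, phi2_mul, ih, phi2_rG]; push_cast; ring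

lemma chi_apply (g : ↥(Stab d 1)) :
    chi d g = Multiplicative.ofAdd (phi2 d (g : ↥(Gamma d))) := rfl

lemma aG_zpow_eq_one {m : ℤ} (h : (m : ZMod d) = 0) : aG d ^ m = 1 :=
  zpow_eq_one_of_dvd d (aG_pow_card d) ((ZMod.intCast_zmod_eq_zero_iff_dvd m d).mp h)

lemma rG_zpow_eq_one {n : ℤ} (h : (n : ZMod d) = 0) : rG d ^ n = 1 :=
  zpow_eq_one_of_dvd d (rG_pow_card d) ((ZMod.intCast_zmod_eq_zero_iff_dvd n d).mp h)

lemma phi1_eq_zero_of_stab {g : ↥(Gamma d)} (hg : g ∈ Stab d 1) : phi1 d g = 0 := by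
  rw [phi1, (mem_stab_one_iff d g).mp hg, cZ_zero]

lemma mem_commutator_iff_of_stab {g : ↥(Gamma d)} (hg : g ∈ Stab d 1) :
    g ∈ commutator ↥(Gamma d) ↔ phi2 d g = 0 := by
  constructor
  · intro h
    exact (psiG_eq_one d ((commutator_le_ker d) h)).2
  · intro h
    obtain ⟨m, n, hγ⟩ := rep d g
    obtain ⟨h1, h2⟩ := key_decomp d hγ
    have hm : (m : ZMod d) = 0 := by rw [← h1]; exact phi1_eq_zero_of_stab d hg
    have hn : (n : ZMod d) = 0 := by rw [← h2]; exact h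
    have : aG d ^ m * rG d ^ n = 1 := by
      rw [aG_zpow_eq_one d hm, rG_zpow_eq_one d hn, one_mul]
    rw [this] at hγ
    simpa using hγ

lemma phi2_eq_cast_of_zpowers (k : ℤ) : phi2 d (rG d ^ k) = (k : ZMod d) := by
  have h1 : rG d ^ k * (aG d ^ (0 : ℤ) * rG d ^ k)⁻¹ = 1 := by simp
  have hγ : rG d ^ k * (aG d ^ (0 : ℤ) * rG d ^ k)⁻¹ ∈ commutator ↥(Gamma d) := by
    rw [h1]; exact one_mem _
  exact (key_decomp d hγ).2

end Aux

end FG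

open scoped commutatorElement

/-- For every `d ≥ 3`: the derived subgroup `Γ_d'` is the normal closure of the commutator
of `a` and `r`, it is contained in `Stab(1)` with index `d` there, and
`Stab(1) = Γ_d' ⋊ ⟨r⟩`. -/
theorem stmt_3 (d : ℕ) [NeZero d] (hd : 3 ≤ d) :
    commutator ↥(FG.Gamma d) = Subgroup.normalClosure {⁅FG.aG d, FG.rG d⁆} ∧
    commutator ↥(FG.Gamma d) ≤ FG.Stab d 1 ∧
    (commutator ↥(FG.Gamma d)).relIndex (FG.Stab d 1) = d ∧
    commutator ↥(FG.Gamma d) ⊓ Subgroup.zpowers (FG.rG d) = ⊥ ∧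
    commutator ↥(FG.Gamma d) ⊔ Subgroup.zpowers (FG.rG d) = FG.Stab d 1 := by
  refine ⟨FG.commutator_eq_nc d, FG.commutator_le_stab d, ?_, ?_, ?_⟩
  · -- relindex
    have hker : (FG.chi d).ker = (commutator ↥(FG.Gamma d)).subgroupOf (FG.Stab d 1) := by
      ext g
      rw [MonoidHom.mem_ker, Subgroup.mem_subgroupOf]
      rw [FG.mem_commutator_iff_of_stab d g.2, FG.chi_apply]
      constructor
      · intro h
        have := congrArg Multiplicative.toAdd h
        simpa using this
      · intro h
        rw [h]; rfl
    have hsurj : Function.Surjective (FG.chi d) := by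
      intro b
      refine ⟨⟨FG.rG d ^ (Multiplicative.toAdd b).val,
        pow_mem (FG.rG_mem_stab d) _⟩, ?_⟩
      rw [FG.chi_apply]
      have : ((⟨FG.rG d ^ (Multiplicative.toAdd b).val, pow_mem (FG.rG_mem_stab d) _⟩ :
          ↥(FG.Stab d 1)) : ↥(FG.Gamma d)) = FG.rG d ^ (Multiplicative.toAdd b).val := rfl
      rw [this, FG.phi2_rG_pow, ZMod.natCast_rightInverse (Multiplicative.toAdd b)]
      simp
    have h0 : (commutator ↥(FG.Gamma d)).relIndex (FG.Stab d 1)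
        = ((commutator ↥(FG.Gamma d)).subgroupOf (FG.Stab d 1)).index := rfl
    rw [h0, ← hker, Subgroup.index_ker, MonoidHom.range_eq_top.mpr hsurj,
      Subgroup.card_top, Nat.card_congr (Multiplicative.toAdd (α := ZMod d)), Nat.card_zmod]
  · -- inf = ⊥
    rw [eq_bot_iff]
    intro g hg
    rw [Subgroup.mem_inf] at hg
    obtain ⟨hgc, hgz⟩ := hg
    obtain ⟨k, rfl⟩ := Subgroup.mem_zpowers_iff.mp hgz
    have h1 : FG.phi2 d (FG.rG d ^ k) = 0 := (FG.psiG_eq_one d ((FG.commutator_le_ker d) hgc)).2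
    have h2 : (k : ZMod d) = 0 := by rw [← FG.phi2_eq_cast_of_zpowers d k]; exact h1
    rw [FG.rG_zpow_eq_one d h2]
    exact Subgroup.one_mem ⊥
  · -- sup = Stab 1
    apply le_antisymm
    · exact sup_le (FG.commutator_le_stab d) (Subgroup.zpowers_le.mpr (FG.rG_mem_stab d))
    · intro g hg
      obtain ⟨m, n, hγ⟩ := FG.rep d g
      obtain ⟨h1, h2⟩ := FG.key_decomp d hγ
      have hm : (m : ZMod d) = 0 := by rw [← h1]; exact FG.phi1_eq_zero_of_stab d hg
      have hgeq : g = g * (FG.aG d ^ m * FG.rG d ^ n)⁻¹ * FG.rG d ^ n := by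
        rw [FG.aG_zpow_eq_one d hm, one_mul, inv_mul_cancel_right]
      rw [hgeq]
      exact Subgroup.mul_mem _ (Subgroup.mem_sup_left hγ)
        (Subgroup.mem_sup_right (Subgroup.zpow_mem_zpowers _ n))
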